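/- arXiv:2212.05233 — 3 statements merged into one kernel-verified Lean document; each statement's English description precedes it below -/
import Mathlib

section
/- The second moment of the number of open root-to-leaf paths satisfies E(Θ_n^2) = E(Θ_n) + Σ_{k=1}^{n} (N-1) N^{n+k-1} p^{n+k+1}. -/
open MeasureTheory ProbabilityTheory
open scoped Classical


namespace Stmt1Aux

variable {N n : ℕ}

noncomputable def dW (ℓ : Fin n → Fin N) (j : ℕ) : List (Fin N) := (List.ofFn ℓ).drop j

lemma length_dW (ℓ : Fin n → Fin N) (j : ℕ) : (dW ℓ j).length = n - j := by
  simp [dW]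

lemma dW_getElem (ℓ : Fin n → Fin N) (j : ℕ) (i : Fin n) (hi : j ≤ (i : ℕ)) :
    (dW ℓ j)[(i : ℕ) - j]'(by rw [length_dW]; omega) = ℓ i := by
  simp only [dW, List.getElem_drop, List.getElem_ofFn]
  congr 1
  apply Fin.ext
  simp
  omega

lemma dW_eq_iff (ℓ ℓ' : Fin n → Fin N) (j : ℕ) :
    dW ℓ j = dW ℓ' j ↔ ∀ i : Fin n, j ≤ (i : ℕ) → ℓ i = ℓ' i := by
  constructor
  · intro h i hi
    rw [← dW_getElem ℓ j i hi, ← dW_getElem ℓ' j i hi]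
    congr 1
  · intro h
    apply List.ext_getElem
    · rw [length_dW, length_dW]
    · intro i h1 h2
      rw [length_dW] at h1
      simp only [dW, List.getElem_drop, List.getElem_ofFn]
      exact h ⟨j + i, by omega⟩ (by simp)

/-- `mdiv ℓ ℓ'` = 1 + (largest index where ℓ, ℓ' differ); 0 if equal. -/
noncomputable def mdiv (ℓ ℓ' : Fin n → Fin N) : ℕ :=
  (Finset.univ.filter (fun i : Fin n => ℓ i ≠ ℓ' i)).sup (fun i => (i : ℕ) + 1)

lemma mdiv_le (ℓ ℓ' : Fin n → Fin N) : mdiv ℓ ℓ' ≤ n := by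
  apply Finset.sup_le
  intro i _
  omega

lemma eq_of_mdiv_le (ℓ ℓ' : Fin n → Fin N) (i : Fin n) (hi : mdiv ℓ ℓ' ≤ (i : ℕ)) :
    ℓ i = ℓ' i := by
  by_contra hne
  have hmem : i ∈ Finset.univ.filter (fun i : Fin n => ℓ i ≠ ℓ' i) :=
    Finset.mem_filter.2 ⟨Finset.mem_univ i, hne⟩
  have h2 : (i : ℕ) + 1 ≤ mdiv ℓ ℓ' :=
    Finset.le_sup (f := fun i : Fin n => (i : ℕ) + 1) hmem
  omega

lemma exists_mdiv (ℓ ℓ' : Fin n → Fin N) (h : ℓ ≠ ℓ') :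
    ∃ i : Fin n, (i : ℕ) + 1 = mdiv ℓ ℓ' ∧ ℓ i ≠ ℓ' i := by
  have hne : (Finset.univ.filter (fun i : Fin n => ℓ i ≠ ℓ' i)).Nonempty := by
    rcases Function.ne_iff.1 h with ⟨i, hi⟩
    exact ⟨i, by simp only [Finset.mem_filter, Finset.mem_univ, true_and]; exact hi⟩
  obtain ⟨i, hi, hsup⟩ := Finset.exists_mem_eq_sup _ hne (fun i : Fin n => (i : ℕ) + 1)
  exact ⟨i, hsup.symm, (Finset.mem_filter.1 hi).2⟩

lemma one_le_mdiv (ℓ ℓ' : Fin n → Fin N) (h : ℓ ≠ ℓ') : 1 ≤ mdiv ℓ ℓ' := by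
  obtain ⟨i, hi, -⟩ := exists_mdiv ℓ ℓ' h
  omega

lemma dW_eq_iff_le (ℓ ℓ' : Fin n → Fin N) (h : ℓ ≠ ℓ') (j : ℕ) :
    dW ℓ j = dW ℓ' j ↔ mdiv ℓ ℓ' ≤ j := by
  rw [dW_eq_iff]
  constructor
  · intro hall
    by_contra hlt
    obtain ⟨i, hi, hne⟩ := exists_mdiv ℓ ℓ' h
    exact hne (hall i (by omega))
  · intro hj i hi
    exact eq_of_mdiv_le ℓ ℓ' i (le_trans hj hi)

lemma card_T (ℓ : Fin n → Fin N) :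
    ((Finset.range (n + 1)).image (dW ℓ)).card = n + 1 := by
  rw [Finset.card_image_of_injOn, Finset.card_range]
  intro a ha b hb hab
  have := congrArg List.length hab
  simp only [length_dW] at this
  simp only [Finset.coe_range, Set.mem_Iio] at ha hb
  omega

lemma card_union_T (ℓ ℓ' : Fin n → Fin N) (h : ℓ ≠ ℓ') :
    ((Finset.range (n + 1)).image (dW ℓ) ∪ (Finset.range (n + 1)).image (dW ℓ')).card
      = n + 1 + mdiv ℓ ℓ' := by
  have hmn : mdiv ℓ ℓ' ≤ n := mdiv_le ℓ ℓ'
  have hU : (Finset.range (n + 1)).image (dW ℓ) ∪ (Finset.range (n + 1)).image (dW ℓ')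
      = (Finset.range (n + 1)).image (dW ℓ) ∪ (Finset.range (mdiv ℓ ℓ')).image (dW ℓ') := by
    apply Finset.Subset.antisymm
    · intro v hv
      rcases Finset.mem_union.1 hv with hv | hv
      · exact Finset.mem_union_left _ hv
      · obtain ⟨j, hj, rfl⟩ := Finset.mem_image.1 hv
        rcases lt_or_ge j (mdiv ℓ ℓ') with hj' | hj'
        · exact Finset.mem_union_right _
            (Finset.mem_image.2 ⟨j, Finset.mem_range.2 hj', rfl⟩)
        · refine Finset.mem_union_left _ (Finset.mem_image.2 ⟨j, hj, ?_⟩)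
          exact (dW_eq_iff_le ℓ ℓ' h j).2 hj'
    · apply Finset.union_subset_union_right
      apply Finset.image_subset_image
      exact Finset.range_subset_range.2 (by omega)
  rw [hU, Finset.card_union_of_disjoint, card_T]
  · congr 1
    rw [Finset.card_image_of_injOn, Finset.card_range]
    intro a ha b hb hab
    have := congrArg List.length hab
    simp only [length_dW] at this
    simp only [Finset.coe_range, Set.mem_Iio] at ha hb
    omega
  · rw [Finset.disjoint_left]
    rintro v hv hv'
    obtain ⟨a, ha, rfl⟩ := Finset.mem_image.1 hv
    obtain ⟨b, hb, hba⟩ := Finset.mem_image.1 hv'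
    rw [Finset.mem_range] at ha hb
    have hlen := congrArg List.length hba
    simp only [length_dW] at hlen
    have hab : a = b := by omega
    subst hab
    have := (dW_eq_iff_le ℓ ℓ' h a).1 hba.symm
    omega

lemma card_filter_lt (n j : ℕ) (hj : j ≤ n) :
    ((Finset.univ : Finset (Fin n)).filter (fun i : Fin n => (i : ℕ) < j)).card = j := by
  have h := Finset.card_bij
    (s := (Finset.univ : Finset (Fin n)).filter (fun i : Fin n => (i : ℕ) < j))
    (t := Finset.range j) (fun i _ => (i : ℕ)) ?_ ?_ ?_
  · rw [h, Finset.card_range]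
  · intro a ha
    simp only [Finset.mem_filter] at ha
    simp only [Finset.mem_range]
    exact ha.2
  · intro a _ b _ hab
    exact Fin.ext hab
  · intro b hb
    simp only [Finset.mem_range] at hb
    exact ⟨⟨b, by omega⟩, by simp [hb], rfl⟩

lemma card_agree (ℓ : Fin n → Fin N) (j : ℕ) (hj : j ≤ n) :
    (Finset.univ.filter
      (fun ℓ' : Fin n → Fin N => ∀ i : Fin n, j ≤ (i : ℕ) → ℓ' i = ℓ i)).card = N ^ j := by
  have hset : Finset.univ.filter
      (fun ℓ' : Fin n → Fin N => ∀ i : Fin n, j ≤ (i : ℕ) → ℓ' i = ℓ i)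
      = Fintype.piFinset (fun i : Fin n =>
          if j ≤ (i : ℕ) then ({ℓ i} : Finset (Fin N)) else Finset.univ) := by
    ext ℓ'
    simp only [Finset.mem_filter, Finset.mem_univ, true_and, Fintype.mem_piFinset]
    constructor
    · intro hall i
      by_cases hi : j ≤ (i : ℕ)
      · simp [hi, hall i hi]
      · simp [hi]
    · intro hall i hi
      have := hall i
      simpa [hi] using this
  rw [hset, Fintype.card_piFinset]
  have : ∀ i : Fin n,
      (if j ≤ (i : ℕ) then ({ℓ i} : Finset (Fin N)) else Finset.univ).card
        = if j ≤ (i : ℕ) then 1 else N := by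
    intro i
    by_cases hi : j ≤ (i : ℕ) <;> simp [hi]
  rw [Finset.prod_congr rfl (fun i _ => this i), Finset.prod_ite]
  simp only [Finset.prod_const, one_pow, one_mul, not_le]
  rw [card_filter_lt n j hj]

lemma fiber_eq (ℓ : Fin n → Fin N) (k : ℕ) (hk1 : 1 ≤ k) (hkn : k ≤ n) :
    (Finset.univ.filter (fun ℓ' : Fin n → Fin N => ℓ' ≠ ℓ ∧ mdiv ℓ ℓ' = k))
      = (Finset.univ.filter
          (fun ℓ' : Fin n → Fin N => ∀ i : Fin n, k ≤ (i : ℕ) → ℓ' i = ℓ i))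
        \ (Finset.univ.filter
          (fun ℓ' : Fin n → Fin N => ∀ i : Fin n, k - 1 ≤ (i : ℕ) → ℓ' i = ℓ i)) := by
  ext ℓ'
  simp only [Finset.mem_sdiff, Finset.mem_filter, Finset.mem_univ, true_and, not_forall]
  constructor
  · rintro ⟨hne, hm⟩
    refine ⟨fun i hi => (eq_of_mdiv_le ℓ ℓ' i (by omega)).symm, ?_⟩
    obtain ⟨i, hi1, hi2⟩ := exists_mdiv ℓ ℓ' (fun h => hne h.symm)
    exact ⟨i, by omega, fun h => hi2 h.symm⟩
  · rintro ⟨hagree, i0, hi0, hne0⟩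
    have hi0k : (i0 : ℕ) = k - 1 := by
      by_contra hcon
      exact hne0 (hagree i0 (by omega))
    have hne : ℓ' ≠ ℓ := fun h => hne0 (congrFun h i0)
    refine ⟨hne, le_antisymm ?_ ?_⟩
    · apply Finset.sup_le
      intro i hi
      have := (Finset.mem_filter.1 hi).2
      by_contra hcon
      exact this ((hagree i (by omega)).symm)
    · have hmem : i0 ∈ Finset.univ.filter (fun i : Fin n => ℓ i ≠ ℓ' i) :=
        Finset.mem_filter.2 ⟨Finset.mem_univ i0, fun h => hne0 h.symm⟩
      have h2 : (i0 : ℕ) + 1 ≤ mdiv ℓ ℓ' :=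
        Finset.le_sup (f := fun i : Fin n => (i : ℕ) + 1) hmem
      omega

lemma card_fiber (ℓ : Fin n → Fin N) (k : ℕ) (hk1 : 1 ≤ k) (hkn : k ≤ n) :
    (Finset.univ.filter (fun ℓ' : Fin n → Fin N => ℓ' ≠ ℓ ∧ mdiv ℓ ℓ' = k)).card
      = N ^ k - N ^ (k - 1) := by
  rw [fiber_eq ℓ k hk1 hkn, Finset.card_sdiff_of_subset, card_agree ℓ k hkn,
    card_agree ℓ (k - 1) (by omega)]
  intro ℓ' hm
  simp only [Finset.mem_filter, Finset.mem_univ, true_and] at hm ⊢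
  intro i hi
  exact hm i (by omega)

/-- The off-diagonal combinatorial sum. -/
lemma comb_sum (hN : 2 ≤ N) (p : ℝ) :
    ∑ ℓ : Fin n → Fin N, ∑ ℓ' ∈ Finset.univ.filter (fun ℓ' => ℓ' ≠ ℓ),
        p ^ (((Finset.range (n + 1)).image (dW ℓ) ∪ (Finset.range (n + 1)).image (dW ℓ')).card)
      = ∑ k ∈ Finset.Icc 1 n, ((N : ℝ) - 1) * (N : ℝ) ^ (n + k - 1) * p ^ (n + k + 1) := by
  have hinner : ∀ ℓ : Fin n → Fin N,
      ∑ ℓ' ∈ Finset.univ.filter (fun ℓ' => ℓ' ≠ ℓ),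
        p ^ (((Finset.range (n + 1)).image (dW ℓ) ∪ (Finset.range (n + 1)).image (dW ℓ')).card)
      = ∑ k ∈ Finset.Icc 1 n, ((N ^ k - N ^ (k - 1) : ℕ) : ℝ) * p ^ (n + 1 + k) := by
    intro ℓ
    have hstep : ∀ ℓ' ∈ Finset.univ.filter (fun ℓ' : Fin n → Fin N => ℓ' ≠ ℓ),
        p ^ (((Finset.range (n + 1)).image (dW ℓ) ∪ (Finset.range (n + 1)).image (dW ℓ')).card)
          = p ^ (n + 1 + mdiv ℓ ℓ') := by
      intro ℓ' hℓ'
      rw [card_union_T ℓ ℓ' (by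
        simp only [Finset.mem_filter] at hℓ'
        exact fun h => hℓ'.2 h.symm)]
    rw [Finset.sum_congr rfl hstep]
    rw [← Finset.sum_fiberwise_of_maps_to (g := fun ℓ' => mdiv ℓ ℓ') (t := Finset.Icc 1 n)
      (fun ℓ' hℓ' => by
        simp only [Finset.mem_filter] at hℓ'
        exact Finset.mem_Icc.2 ⟨one_le_mdiv ℓ ℓ' (fun h => hℓ'.2 h.symm), mdiv_le ℓ ℓ'⟩)]
    apply Finset.sum_congr rfl
    intro k hk
    rw [Finset.mem_Icc] at hk
    have : ∀ ℓ' ∈ (Finset.univ.filter (fun ℓ' : Fin n → Fin N => ℓ' ≠ ℓ)).filter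
        (fun ℓ' => mdiv ℓ ℓ' = k), p ^ (n + 1 + mdiv ℓ ℓ') = p ^ (n + 1 + k) := by
      intro ℓ' hℓ'
      simp only [Finset.mem_filter] at hℓ'
      rw [hℓ'.2]
    rw [Finset.sum_congr rfl this, Finset.sum_const, Finset.filter_filter,
      card_fiber ℓ k hk.1 hk.2, nsmul_eq_mul]
  rw [Finset.sum_congr rfl (fun ℓ _ => hinner ℓ), Finset.sum_const, Finset.card_univ,
    Fintype.card_fun, Fintype.card_fin, Fintype.card_fin, nsmul_eq_mul, Finset.mul_sum]
  apply Finset.sum_congr rfl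
  intro k hk
  rw [Finset.mem_Icc] at hk
  have hcast : ((N ^ k - N ^ (k - 1) : ℕ) : ℝ) = ((N : ℝ) - 1) * (N : ℝ) ^ (k - 1) := by
    rw [Nat.cast_sub (Nat.pow_le_pow_right (by omega) (by omega))]
    have : (N : ℝ) ^ k = (N : ℝ) * (N : ℝ) ^ (k - 1) := by
      rw [← pow_succ']
      congr 1
      omega
    push_cast
    rw [this]
    ring
  rw [hcast]
  have hpow : ((N : ℝ) ^ n) * (((N : ℝ) - 1) * (N : ℝ) ^ (k - 1)) =
      ((N : ℝ) - 1) * (N : ℝ) ^ (n + k - 1) := by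
    rw [show n + k - 1 = n + (k - 1) by omega, pow_add]
    ring
  rw [show n + 1 + k = n + k + 1 by omega]
  push_cast
  rw [← mul_assoc]
  rw [show (N : ℝ) ^ n * (((N : ℝ) - 1) * (N : ℝ) ^ (k - 1)) * p ^ (n + k + 1)
      = (((N : ℝ) ^ n) * (((N : ℝ) - 1) * (N : ℝ) ^ (k - 1))) * p ^ (n + k + 1) from rfl, hpow]

lemma meas_biInter {Ω : Type} [MeasurableSpace Ω] (μ : MeasureTheory.Measure Ω)
    (X : List (Fin N) → Ω → Bool)
    (hindep : iIndepFun X μ)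
    (p : ℝ) (hBer : ∀ v, μ {ω | X v ω = true} = ENNReal.ofReal p)
    (T : Finset (List (Fin N))) :
    μ (⋂ v ∈ T, X v ⁻¹' {true}) = ENNReal.ofReal p ^ T.card := by
  rw [hindep.measure_inter_preimage_eq_mul T (sets := fun _ => {true})
    (fun i _ => measurableSet_singleton true)]
  have : ∀ v ∈ T, μ (X v ⁻¹' {true}) = ENNReal.ofReal p := by
    intro v _
    rw [← hBer v]
    rfl
  rw [Finset.prod_congr rfl this, Finset.prod_const]

end Stmt1Aux

open Stmt1Aux

/-- Vertices of the rooted `N`-ary tree are lists of directions (root = `[]`, children of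
`v` are `d :: v`).  `Θₙ` is the number of open root-to-leaf paths in the depth-`n` tree,
where each vertex is open (`X v = true`) independently with probability `p`.
Second moment: `E(Θₙ²) = E(Θₙ) + Σ_{k=1}^{n} (N-1) N^{n+k-1} p^{n+k+1}`. -/
theorem stmt1 (N n : ℕ) (hN : 2 ≤ N) (p : ℝ) (hp0 : 0 ≤ p) (hp1 : p ≤ 1)
    {Ω : Type} [MeasurableSpace Ω] (μ : Measure Ω) [IsProbabilityMeasure μ]
    (X : List (Fin N) → Ω → Bool)
    (hmeas : ∀ v, Measurable (X v))
    (hindep : iIndepFun X μ)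
    (hBer : ∀ v, μ {ω | X v ω = true} = ENNReal.ofReal p) :
    (μ[fun ω => (((Finset.univ.filter (fun ℓ : Fin n → Fin N =>
        ∀ j ∈ Finset.range (n + 1), X ((List.ofFn ℓ).drop j) ω = true)).card : ℝ)) ^ 2])
      = (μ[fun ω => ((Finset.univ.filter (fun ℓ : Fin n → Fin N =>
          ∀ j ∈ Finset.range (n + 1), X ((List.ofFn ℓ).drop j) ω = true)).card : ℝ)])
        + ∑ k ∈ Finset.Icc 1 n, ((N : ℝ) - 1) * (N : ℝ) ^ (n + k - 1) * p ^ (n + k + 1) := by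
  classical
  set A : (Fin n → Fin N) → Set Ω := fun ℓ =>
    {ω | ∀ j ∈ Finset.range (n + 1), X ((List.ofFn ℓ).drop j) ω = true} with hA
  have hAeq : ∀ ℓ : Fin n → Fin N,
      A ℓ = ⋂ v ∈ (Finset.range (n + 1)).image (dW ℓ), X v ⁻¹' {true} := by
    intro ℓ
    ext ω
    simp only [hA, Set.mem_setOf_eq, Set.mem_iInter, Finset.mem_image, Finset.mem_range,
      Set.mem_preimage, Set.mem_singleton_iff]
    constructor
    · rintro h v ⟨j, hj, rfl⟩
      exact h j hj
    · intro h j hj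
      exact h _ ⟨j, hj, rfl⟩
  have hAmeas : ∀ ℓ, MeasurableSet (A ℓ) := by
    intro ℓ
    rw [hAeq]
    exact MeasurableSet.biInter (Finset.countable_toSet _)
      (fun v _ => hmeas v (measurableSet_singleton true))
  have hAA : ∀ ℓ ℓ' : Fin n → Fin N, μ (A ℓ ∩ A ℓ')
      = ENNReal.ofReal p ^ (((Finset.range (n + 1)).image (dW ℓ)
          ∪ (Finset.range (n + 1)).image (dW ℓ')).card) := by
    intro ℓ ℓ'
    rw [hAeq, hAeq, ← meas_biInter μ X hindep p hBer]
    congr 1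
    ext ω
    simp only [Set.mem_inter_iff, Set.mem_iInter, Finset.mem_union]
    constructor
    · rintro ⟨h1, h2⟩ v hv
      rcases hv with hv | hv
      · exact h1 v hv
      · exact h2 v hv
    · intro h
      exact ⟨fun v hv => h v (Or.inl hv), fun v hv => h v (Or.inr hv)⟩
  have hsum : ∀ ω, ((Finset.univ.filter (fun ℓ : Fin n → Fin N =>
      ∀ j ∈ Finset.range (n + 1), X ((List.ofFn ℓ).drop j) ω = true)).card : ℝ)
      = ∑ ℓ : Fin n → Fin N, (A ℓ).indicator (fun _ => (1 : ℝ)) ω := by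
    intro ω
    rw [Finset.card_filter, Nat.cast_sum]
    apply Finset.sum_congr rfl
    intro ℓ _
    by_cases h : ω ∈ A ℓ
    · have h' : ∀ j ∈ Finset.range (n + 1), X ((List.ofFn ℓ).drop j) ω = true := h
      rw [Set.indicator_of_mem h, if_pos h', Nat.cast_one]
    · have h' : ¬ ∀ j ∈ Finset.range (n + 1), X ((List.ofFn ℓ).drop j) ω = true := h
      rw [Set.indicator_of_notMem h, if_neg h', Nat.cast_zero]
  have hint : ∀ (s : Set Ω), MeasurableSet s →
      ∫ ω, s.indicator (fun _ => (1 : ℝ)) ω ∂μ = (μ s).toReal := by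
    intro s hs
    rw [MeasureTheory.integral_indicator_const (1 : ℝ) hs, smul_eq_mul, mul_one]
    rfl
  have hintg : ∀ (s : Set Ω), MeasurableSet s →
      Integrable (s.indicator (fun _ => (1 : ℝ))) μ :=
    fun s hs => (integrable_const 1).indicator hs
  have hRHS1 : (μ[fun ω => ((Finset.univ.filter (fun ℓ : Fin n → Fin N =>
          ∀ j ∈ Finset.range (n + 1), X ((List.ofFn ℓ).drop j) ω = true)).card : ℝ)])
      = ∑ ℓ : Fin n → Fin N, (μ (A ℓ)).toReal := by
    rw [show (fun ω => ((Finset.univ.filter (fun ℓ : Fin n → Fin N =>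
          ∀ j ∈ Finset.range (n + 1), X ((List.ofFn ℓ).drop j) ω = true)).card : ℝ))
        = fun ω => ∑ ℓ : Fin n → Fin N, (A ℓ).indicator (fun _ => (1 : ℝ)) ω
        from funext hsum]
    rw [MeasureTheory.integral_finset_sum _ (fun ℓ _ => hintg _ (hAmeas ℓ))]
    exact Finset.sum_congr rfl (fun ℓ _ => hint _ (hAmeas ℓ))
  have hLHS : (μ[fun ω => (((Finset.univ.filter (fun ℓ : Fin n → Fin N =>
        ∀ j ∈ Finset.range (n + 1), X ((List.ofFn ℓ).drop j) ω = true)).card : ℝ)) ^ 2])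
      = ∑ ℓ : Fin n → Fin N, ∑ ℓ' : Fin n → Fin N, (μ (A ℓ ∩ A ℓ')).toReal := by
    rw [show (fun ω => (((Finset.univ.filter (fun ℓ : Fin n → Fin N =>
        ∀ j ∈ Finset.range (n + 1), X ((List.ofFn ℓ).drop j) ω = true)).card : ℝ)) ^ 2)
        = fun ω => ∑ ℓ : Fin n → Fin N, ∑ ℓ' : Fin n → Fin N,
            (A ℓ ∩ A ℓ').indicator (fun _ => (1 : ℝ)) ω by
      funext ω
      rw [hsum ω, sq, Finset.sum_mul_sum]
      apply Finset.sum_congr rfl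
      intro ℓ _
      apply Finset.sum_congr rfl
      intro ℓ' _
      rw [← Set.inter_indicator_mul]
      norm_num]
    rw [MeasureTheory.integral_finset_sum _ (fun ℓ _ =>
      integrable_finset_sum _ (fun ℓ' _ => hintg _ ((hAmeas ℓ).inter (hAmeas ℓ'))))]
    apply Finset.sum_congr rfl
    intro ℓ _
    rw [MeasureTheory.integral_finset_sum _ (fun ℓ' _ =>
      hintg _ ((hAmeas ℓ).inter (hAmeas ℓ')))]
    exact Finset.sum_congr rfl (fun ℓ' _ => hint _ ((hAmeas ℓ).inter (hAmeas ℓ')))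
  rw [hLHS, hRHS1]
  have hsplit : ∀ ℓ : Fin n → Fin N, ∑ ℓ' : Fin n → Fin N, (μ (A ℓ ∩ A ℓ')).toReal
      = (μ (A ℓ)).toReal + ∑ ℓ' ∈ Finset.univ.filter (fun ℓ' => ℓ' ≠ ℓ),
          p ^ (((Finset.range (n + 1)).image (dW ℓ)
            ∪ (Finset.range (n + 1)).image (dW ℓ')).card) := by
    intro ℓ
    rw [← Finset.add_sum_erase Finset.univ _ (Finset.mem_univ ℓ), Set.inter_self]
    congr 1
    rw [Finset.filter_ne']
    apply Finset.sum_congr rfl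
    intro ℓ' _
    rw [hAA, ENNReal.toReal_pow, ENNReal.toReal_ofReal hp0]
  rw [Finset.sum_congr rfl (fun ℓ _ => hsplit ℓ), Finset.sum_add_distrib]
  congr 1
  exact comb_sum hN p
end

section
/- For N ≥ 2 and p > 1/N, the limit of P(Θ_n ≥ 1) as n → ∞ is at least (Np - 1)/(N - 1); for p ≤ 1/N, the limit is 0. -/
open MeasureTheory ProbabilityTheory Filter
open scoped Classical

namespace Stmt6Aux

set_option linter.unusedSectionVars false
set_option maxHeartbeats 1000000



variable {Ω : Type} [MeasurableSpace Ω] {μ : Measure Ω}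

lemma iIndepFun_comp_right {ι κ : Type*} {Y : κ → Ω → Bool}
    (h : iIndepFun Y μ) {f : ι → κ} (hf : Function.Injective f) :
    iIndepFun (fun i => Y (f i)) μ := by
  rw [iIndepFun_iff_measure_inter_preimage_eq_mul] at h ⊢
  intro S sets hsets
  rcases S.eq_empty_or_nonempty with rfl | ⟨i0, hi0⟩
  · simpa using h (∅ : Finset κ) (sets := fun _ => Set.univ) (by simp)
  have : Nonempty ι := ⟨i0⟩
  set g := Function.invFun f with hg
  have hgf : ∀ i, g (f i) = i := Function.leftInverse_invFun hf
  have h1 : (⋂ i ∈ S, (fun i => Y (f i)) i ⁻¹' sets i)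
      = ⋂ k ∈ S.image f, Y k ⁻¹' sets (g k) := by
    rw [Finset.set_biInter_finset_image]
    exact Set.iInter₂_congr fun i _ => by rw [hgf]
  have h2 : (∏ i ∈ S, μ ((fun i => Y (f i)) i ⁻¹' sets i))
      = ∏ k ∈ S.image f, μ (Y k ⁻¹' sets (g k)) := by
    rw [Finset.prod_image (fun a _ b _ hab => hf hab)]
    exact Finset.prod_congr rfl fun i _ => by rw [hgf]
  rw [h1, h2]
  exact h (S.image f) (sets := fun k => sets (g k)) fun k _ => (Set.toFinite _).measurableSet

variable {N : ℕ}

/-- sigma-algebra generated by a subfamily -/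
def famM (Y : List (Fin N) → Ω → Bool) (S : Set (List (Fin N))) : MeasurableSpace Ω :=
  ⨆ v ∈ S, MeasurableSpace.comap (Y v) inferInstance

lemma measurableSet_mono {m₁ m₂ : MeasurableSpace Ω} (h : m₁ ≤ m₂) {s : Set Ω}
    (hs : MeasurableSet[m₁] s) : MeasurableSet[m₂] s := h _ hs

lemma famM_le {Y : List (Fin N) → Ω → Bool} (hm : ∀ v, Measurable (Y v))
    (S : Set (List (Fin N))) : famM Y S ≤ ‹MeasurableSpace Ω› :=
  iSup₂_le fun v _ => (hm v).comap_le

lemma famM_mono {Y : List (Fin N) → Ω → Bool} {S T : Set (List (Fin N))} (h : S ⊆ T) :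
    famM Y S ≤ famM Y T :=
  iSup₂_le fun v hv => le_iSup₂ (f := fun v (_ : v ∈ T) => MeasurableSpace.comap (Y v) inferInstance) v (h hv)

lemma indep_famM {Y : List (Fin N) → Ω → Bool} (hm : ∀ v, Measurable (Y v))
    (hi : iIndepFun Y μ) {S T : Set (List (Fin N))}
    (hST : Disjoint S T) : Indep (famM Y S) (famM Y T) μ :=
  indep_iSup_of_disjoint (fun v => (hm v).comap_le) hi.iIndep hST

lemma measSet_basic {Y : List (Fin N) → Ω → Bool} {S : Set (List (Fin N))} {v : List (Fin N)}
    (hv : v ∈ S) : MeasurableSet[famM Y S] {ω | Y v ω = true} :=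
  le_iSup₂ (f := fun v (_ : v ∈ S) => MeasurableSpace.comap (Y v) inferInstance) v hv _
    ⟨{true}, (Set.toFinite _).measurableSet, rfl⟩

lemma measSet_event (Y : List (Fin N) → Ω → Bool) (n : ℕ)
    (c : List (Fin N) → List (Fin N)) {S : Set (List (Fin N))} (hc : ∀ w, c w ∈ S) :
    MeasurableSet[famM Y S] {ω | ∃ ℓ : Fin n → Fin N,
      ∀ j ∈ Finset.range (n + 1), Y (c ((List.ofFn ℓ).drop j)) ω = true} := by
  have h1 : {ω | ∃ ℓ : Fin n → Fin N,
      ∀ j ∈ Finset.range (n + 1), Y (c ((List.ofFn ℓ).drop j)) ω = true}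
      = ⋃ ℓ : Fin n → Fin N, ⋂ j ∈ Finset.range (n + 1),
        {ω | Y (c ((List.ofFn ℓ).drop j)) ω = true} := by
    ext ω; simp
  rw [h1]
  exact MeasurableSet.iUnion fun ℓ =>
    Finset.measurableSet_biInter _ fun j _ => measSet_basic (hc _)



noncomputable def rseq (N : ℕ) (p : ℝ) : ℕ → ℝ
  | 0 => p
  | n + 1 => p * (1 - (1 - rseq N p n) ^ N)

lemma rseq_bounds {N : ℕ} {p : ℝ} (hp0 : 0 ≤ p) (hp1 : p ≤ 1) :
    ∀ n, 0 ≤ rseq N p n ∧ rseq N p n ≤ 1 := by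
  intro n
  induction n with
  | zero => exact ⟨hp0, hp1⟩
  | succ n ih =>
    have h1 : 0 ≤ (1 - rseq N p n) ^ N := pow_nonneg (by linarith [ih.2]) N
    have h2 : (1 - rseq N p n) ^ N ≤ 1 := pow_le_one₀ (by linarith [ih.2]) (by linarith [ih.1])
    constructor
    · exact mul_nonneg hp0 (by linarith)
    · calc p * (1 - (1 - rseq N p n) ^ N) ≤ 1 * 1 := by
            apply mul_le_mul hp1 (by linarith) (by linarith) zero_le_one
        _ = 1 := by ring

lemma rseq_mono_aux {N : ℕ} {p : ℝ} (hp0 : 0 ≤ p) {x y : ℝ} (hxy : x ≤ y) (hy : y ≤ 1) :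
    p * (1 - (1 - x) ^ N) ≤ p * (1 - (1 - y) ^ N) := by
  apply mul_le_mul_of_nonneg_left _ hp0
  have : (1 - y) ^ N ≤ (1 - x) ^ N := pow_le_pow_left₀ (by linarith) (by linarith) N
  linarith

lemma rseq_antitone {N : ℕ} {p : ℝ} (hp0 : 0 ≤ p) (hp1 : p ≤ 1) :
    Antitone (rseq N p) := by
  apply antitone_nat_of_succ_le
  intro n
  induction n with
  | zero =>
    show p * (1 - (1 - p) ^ N) ≤ p
    have h1 : 0 ≤ (1 - p) ^ N := pow_nonneg (by linarith) N
    nlinarith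
  | succ n ih =>
    show p * (1 - (1 - rseq N p (n+1)) ^ N) ≤ p * (1 - (1 - rseq N p n) ^ N)
    exact rseq_mono_aux hp0 ih (rseq_bounds hp0 hp1 n).2

lemma rseq_tendsto {N : ℕ} {p : ℝ} (hp0 : 0 ≤ p) (hp1 : p ≤ 1) :
    Tendsto (rseq N p) atTop (nhds (⨅ n, rseq N p n)) :=
  tendsto_atTop_ciInf (rseq_antitone hp0 hp1)
    ⟨0, by rintro _ ⟨n, rfl⟩; exact (rseq_bounds hp0 hp1 n).1⟩

/-- key AM-GM inequality: t ≤ f t for t = (Np-1)/(N-1) -/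
lemma key_ineq {N : ℕ} (hN : 2 ≤ N) {p : ℝ} (hp : 1 / (N : ℝ) < p) (hp1 : p < 1) :
    ((N : ℝ) * p - 1) / ((N : ℝ) - 1) ≤ p * (1 - (1 - ((N : ℝ) * p - 1) / ((N : ℝ) - 1)) ^ N) := by
  obtain ⟨m, rfl⟩ : ∃ m, N = m + 2 := ⟨N - 2, by omega⟩
  have hm : ((m : ℝ) + 2) - 1 = (m : ℝ) + 1 := by ring
  have hc : (0 : ℝ) < (m : ℝ) + 1 := by positivity
  have hc2 : (0 : ℝ) < (m : ℝ) + 2 := by positivity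
  set t : ℝ := (((m : ℝ) + 2) * p - 1) / (((m : ℝ) + 1)) with ht
  have hNr : ((m + 2 : ℕ) : ℝ) = (m : ℝ) + 2 := by push_cast; ring
  rw [show (((m + 2 : ℕ) : ℝ) * p - 1) / (((m + 2 : ℕ) : ℝ) - 1) = t by rw [hNr]; rw [ht]; ring_nf]
  set b : ℝ := ((m : ℝ) + 2) * (1 - p) / ((m : ℝ) + 1) with hb
  have h1t : 1 - t = b := by rw [ht, hb]; field_simp; ring
  have hpt : p - t = (1 - p) / ((m : ℝ) + 1) := by rw [ht]; field_simp; ring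
  have hp' : 0 ≤ 1 - p := by linarith
  have hb0 : 0 ≤ b := by rw [hb]; positivity
  have hp0 : 0 < p := lt_trans (by positivity) hp
  set a : ℝ := ((m : ℝ) + 2) * p with ha
  have ha0 : 0 ≤ a := by positivity
  -- weighted AM-GM
  have hG : a ^ ((1 : ℝ) / ((m : ℝ) + 2)) * b ^ (((m : ℝ) + 1) / ((m : ℝ) + 2)) ≤ 1 := by
    have := Real.geom_mean_le_arith_mean2_weighted
      (w₁ := 1 / ((m : ℝ) + 2)) (w₂ := ((m : ℝ) + 1) / ((m : ℝ) + 2)) (p₁ := a) (p₂ := b)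
      (by positivity) (by positivity) ha0 hb0 (by field_simp; ring)
    calc a ^ ((1 : ℝ) / ((m : ℝ) + 2)) * b ^ (((m : ℝ) + 1) / ((m : ℝ) + 2))
        ≤ 1 / ((m : ℝ) + 2) * a + ((m : ℝ) + 1) / ((m : ℝ) + 2) * b := this
      _ = 1 := by rw [ha, hb]; field_simp; ring
  have hab : a * b ^ (m + 1) ≤ 1 := by
    have hpow := pow_le_pow_left₀ (by positivity) hG (m + 2)
    rw [one_pow, mul_pow] at hpow
    have e1 : (a ^ ((1 : ℝ) / ((m : ℝ) + 2))) ^ (m + 2) = a := by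
      rw [← Real.rpow_natCast (a ^ ((1 : ℝ) / ((m : ℝ) + 2))) (m + 2),
        ← Real.rpow_mul ha0]
      rw [show (1 : ℝ) / ((m : ℝ) + 2) * ((m + 2 : ℕ) : ℝ) = 1 by push_cast; field_simp]
      exact Real.rpow_one a
    have e2 : (b ^ (((m : ℝ) + 1) / ((m : ℝ) + 2))) ^ (m + 2) = b ^ (m + 1) := by
      rw [← Real.rpow_natCast (b ^ (((m : ℝ) + 1) / ((m : ℝ) + 2))) (m + 2),
        ← Real.rpow_mul hb0]
      rw [show ((m : ℝ) + 1) / ((m : ℝ) + 2) * ((m + 2 : ℕ) : ℝ) = ((m + 1 : ℕ) : ℝ) by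
        push_cast; field_simp]
      exact Real.rpow_natCast b (m + 1)
    rwa [e1, e2] at hpow
  -- deduce p * b^(m+2) ≤ p - t
  have hkey : p * b ^ (m + 2) ≤ p - t := by
    have h2 : p * b ^ (m + 2) = a * b ^ (m + 1) * (b / ((m : ℝ) + 2)) := by
      rw [ha]; field_simp; ring
    have h3 : a * b ^ (m + 1) * (b / ((m : ℝ) + 2)) ≤ 1 * (b / ((m : ℝ) + 2)) :=
      mul_le_mul_of_nonneg_right hab (by positivity)
    have h4 : b / ((m : ℝ) + 2) = (1 - p) / ((m : ℝ) + 1) := by rw [hb]; field_simp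
    rw [h2, hpt]
    calc a * b ^ (m + 1) * (b / ((m : ℝ) + 2)) ≤ 1 * (b / ((m : ℝ) + 2)) := h3
      _ = (1 - p) / ((m : ℝ) + 1) := by rw [one_mul, h4]
  have hfin : p * (1 - t) ^ (m + 2) ≤ p - t := by rw [h1t]; exact hkey
  nlinarith [hfin]




lemma rseq_ge {N : ℕ} (hN : 2 ≤ N) {p : ℝ} (hp : 1 / (N : ℝ) < p) (hp1 : p < 1) :
    ∀ n, ((N : ℝ) * p - 1) / ((N : ℝ) - 1) ≤ rseq N p n := by
  have hN0 : (0 : ℝ) < N := by positivity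
  have hc : (0 : ℝ) < (N : ℝ) - 1 := by
    have : (2 : ℝ) ≤ N := by exact_mod_cast hN
    linarith
  have hp0 : 0 < p := lt_trans (by positivity) hp
  intro n
  induction n with
  | zero =>
    show _ ≤ p
    rw [div_le_iff₀ hc]; nlinarith
  | succ n ih =>
    calc ((N : ℝ) * p - 1) / ((N : ℝ) - 1)
        ≤ p * (1 - (1 - ((N : ℝ) * p - 1) / ((N : ℝ) - 1)) ^ N) := key_ineq hN hp hp1
      _ ≤ p * (1 - (1 - rseq N p n) ^ N) :=
          rseq_mono_aux hp0.le ih (rseq_bounds hp0.le hp1.le n).2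
      _ = rseq N p (n + 1) := rfl

lemma rseq_fixed {N : ℕ} {p : ℝ} (hp0 : 0 ≤ p) (hp1 : p ≤ 1) :
    (⨅ n, rseq N p n) = p * (1 - (1 - ⨅ n, rseq N p n) ^ N) := by
  set L := ⨅ n, rseq N p n with hL
  have h1 : Tendsto (fun n => rseq N p (n + 1)) atTop (nhds L) :=
    (rseq_tendsto hp0 hp1).comp (tendsto_add_atTop_nat 1)
  have hcont : Continuous (fun x : ℝ => p * (1 - (1 - x) ^ N)) := by continuity
  have h2 : Tendsto (fun n => p * (1 - (1 - rseq N p n) ^ N)) atTop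
      (nhds (p * (1 - (1 - L) ^ N))) :=
    (hcont.tendsto L).comp (rseq_tendsto hp0 hp1)
  have h3 : (fun n => rseq N p (n + 1)) = fun n => p * (1 - (1 - rseq N p n) ^ N) := rfl
  rw [h3] at h1
  exact tendsto_nhds_unique h1 h2

lemma rseq_iInf_zero {N : ℕ} (hN : 2 ≤ N) {p : ℝ} (hp0 : 0 < p) (hp1 : p < 1)
    (hp : p ≤ 1 / (N : ℝ)) : (⨅ n, rseq N p n) = 0 := by
  have hN0 : (0 : ℝ) < N := by positivity
  set L := ⨅ n, rseq N p n with hL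
  have hbdd : BddBelow (Set.range (rseq N p)) :=
    ⟨0, by rintro _ ⟨n, rfl⟩; exact (rseq_bounds hp0.le hp1.le n).1⟩
  have hL0 : 0 ≤ L := le_ciInf fun n => (rseq_bounds hp0.le hp1.le n).1
  have hL1 : L ≤ 1 := le_trans (ciInf_le hbdd 0) hp1.le
  rcases eq_or_lt_of_le hL0 with h | hLpos
  · exact h.symm
  exfalso
  obtain ⟨x, hx⟩ : ∃ x : ℝ, x = 1 - L := ⟨_, rfl⟩
  have hx0 : 0 ≤ x := by rw [hx]; linarith
  have hx1 : x < 1 := by rw [hx]; linarith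
  have hs : ∑ k ∈ Finset.range N, x ^ k < N := by
    calc ∑ k ∈ Finset.range N, x ^ k < ∑ k ∈ Finset.range N, 1 := by
          apply Finset.sum_lt_sum (fun k _ => pow_le_one₀ hx0 hx1.le)
          exact ⟨1, Finset.mem_range.2 (by omega), by simpa using hx1⟩
      _ = N := by simp
  have hid : 1 - x ^ N = (1 - x) * ∑ k ∈ Finset.range N, x ^ k := by
    linear_combination geom_sum_mul x N
  have hgeom : 1 - (1 - L) ^ N < N * L := by
    rw [show (1 : ℝ) - L = x from hx.symm]
    rw [hid, show (1 : ℝ) - x = L by rw [hx]; ring]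
    calc L * ∑ k ∈ Finset.range N, x ^ k < L * N := by
          exact mul_lt_mul_of_pos_left hs hLpos
      _ = N * L := by ring
  have hfix := rseq_fixed (N := N) hp0.le hp1.le
  rw [← hL] at hfix
  have : L < p * ((N : ℝ) * L) := by
    calc L = p * (1 - (1 - L) ^ N) := hfix
      _ < p * ((N : ℝ) * L) := by exact mul_lt_mul_of_pos_left hgeom hp0
  have h2 : p * ((N : ℝ) * L) ≤ 1 / (N : ℝ) * ((N : ℝ) * L) :=
    mul_le_mul_of_nonneg_right hp (by positivity)
  have h3 : 1 / (N : ℝ) * ((N : ℝ) * L) = L := by field_simp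
  linarith











/-- the block of vertices whose list ends with `d` -/
def Blk (d : Fin N) : Set (List (Fin N)) := {l | l.getLast? = some d}

lemma key [IsProbabilityMeasure μ] {p : ℝ} (hp0 : 0 ≤ p) (hp1 : p ≤ 1) :
    ∀ (n : ℕ) (Y : List (Fin N) → Ω → Bool), (∀ v, Measurable (Y v)) →
      iIndepFun Y μ →
      (∀ v, μ {ω | Y v ω = true} = ENNReal.ofReal p) →
      μ {ω | ∃ ℓ : Fin n → Fin N,
        ∀ j ∈ Finset.range (n + 1), Y ((List.ofFn ℓ).drop j) ω = true}
        = ENNReal.ofReal (rseq N p n) := by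
  intro n
  induction n with
  | zero =>
    intro Y hm hi hB
    have hset : {ω | ∃ ℓ : Fin 0 → Fin N,
        ∀ j ∈ Finset.range 1, Y ((List.ofFn ℓ).drop j) ω = true} = {ω | Y [] ω = true} := by
      ext ω
      simp only [Set.mem_setOf_eq]
      constructor
      · rintro ⟨ℓ, h⟩
        have := h 0 (Finset.mem_range.2 one_pos)
        simpa using this
      · intro h
        refine ⟨fun i => i.elim0, ?_⟩
        intro j hj
        have hj0 : j = 0 := by have := Finset.mem_range.1 hj; omega
        subst hj0; simpa using h
    rw [hset, hB]
    rfl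
  | succ n IH =>
    intro Y hm hi hB
    set E : Fin N → Set Ω := fun d => {ω | ∃ ℓ : Fin n → Fin N,
      ∀ j ∈ Finset.range (n + 1), Y ((List.ofFn ℓ).drop j ++ [d]) ω = true} with hE
    -- split the event
    have hsplit : {ω | ∃ ℓ : Fin (n + 1) → Fin N,
        ∀ j ∈ Finset.range (n + 1 + 1), Y ((List.ofFn ℓ).drop j) ω = true}
        = {ω | Y [] ω = true} ∩ ⋃ d : Fin N, E d := by
      ext ω
      simp only [hE, Set.mem_setOf_eq, Set.mem_inter_iff, Set.mem_iUnion]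
      constructor
      · rintro ⟨ℓ, h⟩
        have hlen : (List.ofFn ℓ).length = n + 1 := by simp
        have hroot := h (n + 1) (Finset.mem_range.2 (Nat.lt_succ_self _))
        rw [show (List.ofFn ℓ).drop (n + 1) = [] from
          List.drop_eq_nil_of_le (by simp)] at hroot
        refine ⟨hroot, ℓ (Fin.last n), fun i => ℓ i.castSucc, ?_⟩
        intro j hj
        have hj' : j < n + 1 := Finset.mem_range.1 hj
        have hsucc : List.ofFn ℓ = List.ofFn (fun i => ℓ i.castSucc) ++ [ℓ (Fin.last n)] := by
          rw [List.ofFn_succ', List.concat_eq_append]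
        have := h j (Finset.mem_range.2 (Nat.lt_succ_of_lt hj'))
        rwa [hsucc, List.drop_append_of_le_length (by simp; omega)] at this
      · rintro ⟨hroot, d, ℓ', h⟩
        refine ⟨Fin.snoc ℓ' d, ?_⟩
        have hsucc : List.ofFn (Fin.snoc ℓ' d : Fin (n + 1) → Fin N)
            = List.ofFn ℓ' ++ [d] := by
          rw [List.ofFn_succ', List.concat_eq_append]
          simp
        intro j hj
        have hj' : j < n + 2 := Finset.mem_range.1 hj
        rcases Nat.lt_succ_iff_lt_or_eq.1 hj' with hlt | heq
        · rw [hsucc, List.drop_append_of_le_length (by simp; omega)]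
          exact h j (Finset.mem_range.2 hlt)
        · rw [heq, hsucc, show (List.ofFn ℓ' ++ [d]).drop (n + 1) = [] by
            apply List.drop_eq_nil_of_le; simp]
          exact hroot
    -- measure of each sub-event
    have hEd : ∀ d, μ (E d) = ENNReal.ofReal (rseq N p n) := by
      intro d
      have hinj : Function.Injective (fun v : List (Fin N) => v ++ [d]) :=
        List.append_left_injective [d]
      exact IH (fun v => Y (v ++ [d])) (fun v => hm _) (iIndepFun_comp_right hi hinj)
        (fun v => hB _)
    -- measurability of sub-events in their blocks
    have hcBlk : ∀ d : Fin N, ∀ w : List (Fin N), w ++ [d] ∈ Blk d := by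
      intro d w
      show (w ++ [d]).getLast? = some d
      rw [List.getLast?_append_of_ne_nil w (by simp)]
      rfl
    have hmeasE : ∀ d, MeasurableSet[famM Y (Blk d)] (E d) := fun d =>
      measSet_event Y n (fun w => w ++ [d]) (hcBlk d)
    have hmeasE' : ∀ d, MeasurableSet (E d) := fun d =>
      measurableSet_mono (famM_le hm _) (hmeasE d)
    have hBlkdisj : ∀ (a : Fin N) (u : Finset (Fin N)), a ∉ u →
        Disjoint (Blk a) (⋃ d ∈ u, Blk d) := by
      intro a u ha
      refine Set.disjoint_left.2 ?_
      intro l hla hlu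
      simp only [Set.mem_iUnion] at hlu
      obtain ⟨d, hdu, hld⟩ := hlu
      have : a = d := by
        have h1 : l.getLast? = some a := hla
        have h2 : l.getLast? = some d := hld
        rw [h1] at h2; exact Option.some_injective _ h2
      exact ha (this ▸ hdu)
    -- product formula for intersection of complements
    have hprod : ∀ u : Finset (Fin N), μ (⋂ d ∈ u, (E d)ᶜ) = ∏ d ∈ u, μ ((E d)ᶜ) := by
      intro u
      induction u using Finset.induction_on with
      | empty => simp
      | @insert a u ha ih =>
        rw [Finset.set_biInter_insert, Finset.prod_insert ha, ← ih]
        have hI : Indep (famM Y (Blk a)) (famM Y (⋃ d ∈ u, Blk d)) μ :=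
          indep_famM hm hi (hBlkdisj a u ha)
        have hmeas2 : MeasurableSet[famM Y (⋃ d ∈ u, Blk d)] (⋂ d ∈ u, (E d)ᶜ) :=
          Finset.measurableSet_biInter u fun d hd =>
            (measurableSet_mono (famM_mono (Set.subset_biUnion_of_mem hd)) (hmeasE d)).compl
        exact (Indep_iff _ _ _).1 hI _ _ (hmeasE a).compl hmeas2
    -- measure of the union
    have hr := rseq_bounds (N := N) hp0 hp1 n
    have hx0 : (0 : ℝ) ≤ 1 - rseq N p n := by linarith [hr.2]
    have hcompl : ∀ d, μ ((E d)ᶜ) = ENNReal.ofReal (1 - rseq N p n) := by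
      intro d
      rw [prob_compl_eq_one_sub (hmeasE' d), hEd d, ENNReal.ofReal_sub _ (hr.1),
        ENNReal.ofReal_one]
    have hU : μ (⋃ d : Fin N, E d) = ENNReal.ofReal (1 - (1 - rseq N p n) ^ N) := by
      have hUm : MeasurableSet (⋃ d : Fin N, E d) := MeasurableSet.iUnion hmeasE'
      have h1 : μ ((⋃ d : Fin N, E d)ᶜ) = ENNReal.ofReal ((1 - rseq N p n) ^ N) := by
        rw [Set.compl_iUnion]
        have : (⋂ d : Fin N, (E d)ᶜ) = ⋂ d ∈ (Finset.univ : Finset (Fin N)), (E d)ᶜ := by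
          simp
        rw [this, hprod Finset.univ]
        rw [Finset.prod_congr rfl fun d _ => hcompl d, Finset.prod_const,
          Finset.card_univ, Fintype.card_fin, ← ENNReal.ofReal_pow hx0]
      have h3 : μ (⋃ d : Fin N, E d) = 1 - μ ((⋃ d : Fin N, E d)ᶜ) := by
        rw [prob_compl_eq_one_sub hUm]
        rw [ENNReal.sub_sub_cancel ENNReal.one_ne_top prob_le_one]
      rw [h3, h1, ENNReal.ofReal_sub _ (pow_nonneg hx0 N), ENNReal.ofReal_one]
    -- independence of root and union
    have hrootU : μ ({ω | Y [] ω = true} ∩ ⋃ d : Fin N, E d)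
        = ENNReal.ofReal p * μ (⋃ d : Fin N, E d) := by
      have hdisj : Disjoint ({[]} : Set (List (Fin N))) (⋃ d : Fin N, Blk d) := by
        refine Set.disjoint_left.2 ?_
        intro l hl hlu
        simp only [Set.mem_singleton_iff] at hl
        simp only [Set.mem_iUnion] at hlu
        obtain ⟨d, hld⟩ := hlu
        rw [hl] at hld
        exact absurd (show ([] : List (Fin N)).getLast? = some d from hld) (by simp)
      have hI : Indep (famM Y {[]}) (famM Y (⋃ d : Fin N, Blk d)) μ :=
        indep_famM hm hi hdisj
      have hmeas1 : MeasurableSet[famM Y {[]}] {ω | Y [] ω = true} :=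
        measSet_basic rfl
      have hmeas2 : MeasurableSet[famM Y (⋃ d : Fin N, Blk d)] (⋃ d : Fin N, E d) :=
        MeasurableSet.iUnion fun d =>
          measurableSet_mono (famM_mono (Set.subset_iUnion Blk d)) (hmeasE d)
      rw [(Indep_iff _ _ _).1 hI _ _ hmeas1 hmeas2, hB]
    rw [hsplit, hrootU, hU, ← ENNReal.ofReal_mul hp0]
    rfl

end Stmt6Aux

open Stmt6Aux

/-- Vertices of the rooted `N`-ary tree are lists of directions (root = `[]`, children of
`v` are `d :: v`); each vertex is open independently with probability `p`, and
`Θ n ω` is the number of open root-to-leaf paths in the depth-`n` tree.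
For `p > 1/N` the limit of `P(Θₙ ≥ 1)` is at least `(Np - 1)/(N - 1)`;
for `p ≤ 1/N` the limit is `0`. -/
theorem stmt6 (N : ℕ) (hN : 2 ≤ N) (p : ℝ) (hp0 : 0 < p) (hp1 : p < 1)
    {Ω : Type} [MeasurableSpace Ω] (μ : Measure Ω) [IsProbabilityMeasure μ]
    (X : List (Fin N) → Ω → Bool)
    (hmeas : ∀ v, Measurable (X v))
    (hindep : iIndepFun X μ)
    (hBer : ∀ v, μ {ω | X v ω = true} = ENNReal.ofReal p)
    (Θ : ℕ → Ω → ℕ)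
    (hΘ : ∀ n ω, Θ n ω = (Finset.univ.filter (fun ℓ : Fin n → Fin N =>
        ∀ j ∈ Finset.range (n + 1), X ((List.ofFn ℓ).drop j) ω = true)).card) :
    (1 / N < p → ∃ L : ℝ, Tendsto (fun n => (μ {ω | 1 ≤ Θ n ω}).toReal) atTop (nhds L) ∧
        (N * p - 1) / (N - 1) ≤ L) ∧
    (p ≤ 1 / N → Tendsto (fun n => (μ {ω | 1 ≤ Θ n ω}).toReal) atTop (nhds 0)) := by
  have hset : ∀ n, {ω | 1 ≤ Θ n ω} = {ω | ∃ ℓ : Fin n → Fin N,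
      ∀ j ∈ Finset.range (n + 1), X ((List.ofFn ℓ).drop j) ω = true} := by
    intro n; ext ω
    simp only [Set.mem_setOf_eq, hΘ n ω]
    constructor
    · intro h
      obtain ⟨ℓ, hℓ⟩ := Finset.card_pos.1 (lt_of_lt_of_le one_pos h)
      simp only [Finset.mem_filter, Finset.mem_univ, true_and] at hℓ
      exact ⟨ℓ, hℓ⟩
    · rintro ⟨ℓ, hℓ⟩
      apply Finset.card_pos.2
      refine ⟨ℓ, ?_⟩
      simp only [Finset.mem_filter, Finset.mem_univ, true_and]
      exact hℓ
  have hμ : ∀ n, μ {ω | 1 ≤ Θ n ω} = ENNReal.ofReal (rseq N p n) := fun n => by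
    rw [hset n]; exact key hp0.le hp1.le n X hmeas hindep hBer
  have hfun : (fun n => (μ {ω | 1 ≤ Θ n ω}).toReal) = rseq N p := funext fun n => by
    rw [hμ n, ENNReal.toReal_ofReal (rseq_bounds hp0.le hp1.le n).1]
  constructor
  · intro hp
    refine ⟨⨅ n, rseq N p n, ?_, ?_⟩
    · rw [hfun]; exact rseq_tendsto hp0.le hp1.le
    · exact le_ciInf (rseq_ge hN hp hp1)
  · intro hp
    rw [hfun]
    have h0 := rseq_iInf_zero hN hp0 hp1 hp
    have htend := rseq_tendsto (N := N) hp0.le hp1.le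
    rwa [h0] at htend
end

section
/- For the N-ary tree of depth n and 1 ≤ m ≤ k, the number a_m of ordered pairs of downward paths of length k sharing exactly m vertices satisfies a_m ≤ 2 M N^{k - m + 1}, where M = (N^{n+1} - N^k)/(N - 1) is the total number of downward paths of length k. -/
open scoped Classical

/-- The level-`j` vertices of the rooted `N`-ary tree, encoded as lists of directions read
from the vertex back up to the root (root = `[]`, children of `v` are `d :: v`,
the ancestor `i` levels above `v` is `v.drop i`). -/
noncomputable def listsLen (N j : ℕ) : Finset (List (Fin N)) :=
  (Finset.univ : Finset (Fin j → Fin N)).image List.ofFn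

/-- A downward path of length `k` in the depth-`n` tree is determined by its bottom vertex,
which can be any vertex at level `j` with `k ≤ j ≤ n`. -/
noncomputable def pathBottoms (N n k : ℕ) : Finset (List (Fin N)) :=
  (Finset.Icc k n).biUnion (listsLen N)

/-- The vertex set of the downward path of length `k` with bottom vertex `b`. -/
def pathSet {N : ℕ} (b : List (Fin N)) (k : ℕ) : Finset (List (Fin N)) :=
  (Finset.range (k + 1)).image (fun i => b.drop i)

lemma mem_listsLen {N j : ℕ} {l : List (Fin N)} : l ∈ listsLen N j ↔ l.length = j := by
  simp only [listsLen, Finset.mem_image, Finset.mem_univ, true_and]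
  constructor
  · rintro ⟨f, rfl⟩; simp
  · rintro rfl; exact ⟨l.get, List.ofFn_get l⟩

lemma card_listsLen (N j : ℕ) : (listsLen N j).card = N ^ j := by
  rw [listsLen, Finset.card_image_of_injective _ List.ofFn_injective, Finset.card_univ]
  simp

lemma mem_pathBottoms {N n k : ℕ} {b : List (Fin N)} :
    b ∈ pathBottoms N n k ↔ k ≤ b.length ∧ b.length ≤ n := by
  simp only [pathBottoms, Finset.mem_biUnion, Finset.mem_Icc, mem_listsLen]
  constructor
  · rintro ⟨j, ⟨h1, h2⟩, rfl⟩; exact ⟨h1, h2⟩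
  · rintro ⟨h1, h2⟩; exact ⟨b.length, ⟨h1, h2⟩, rfl⟩

lemma mem_pathSet {N k : ℕ} {b v : List (Fin N)} :
    v ∈ pathSet b k ↔ ∃ i ≤ k, b.drop i = v := by
  simp only [pathSet, Finset.mem_image, Finset.mem_range, Nat.lt_succ_iff]

lemma drop_succ_eq {N : ℕ} {b b' : List (Fin N)} {i i' : ℕ}
    (h : b.drop i = b'.drop i') : b.drop (i+1) = b'.drop (i'+1) := by
  have := congrArg (List.drop 1) h
  simpa [List.drop_drop] using this

lemma inter_card {N k : ℕ} {b b' : List (Fin N)} (hb : k ≤ b.length) :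
    (pathSet b k ∩ pathSet b' k).card =
      ((Finset.range (k+1)).filter (fun i => b.drop i ∈ pathSet b' k)).card := by
  have himg : pathSet b k ∩ pathSet b' k =
      ((Finset.range (k+1)).filter (fun i => b.drop i ∈ pathSet b' k)).image
        (fun i => b.drop i) := by
    ext v
    simp only [Finset.mem_inter, Finset.mem_image, Finset.mem_filter, Finset.mem_range,
      Nat.lt_succ_iff]
    constructor
    · rintro ⟨hv1, hv2⟩
      obtain ⟨i, hi, rfl⟩ := mem_pathSet.mp hv1
      exact ⟨i, ⟨hi, hv2⟩, rfl⟩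
    · rintro ⟨i, ⟨hi, hv⟩, rfl⟩
      exact ⟨mem_pathSet.mpr ⟨i, hi, rfl⟩, hv⟩
  rw [himg, Finset.card_image_of_injOn]
  intro i hi j hj hij
  simp only [Finset.coe_filter, Set.mem_setOf_eq, Finset.mem_range, Nat.lt_succ_iff] at hi hj
  have := congrArg List.length hij
  simp only [List.length_drop] at this
  omega

lemma topCase {N k : ℕ} {b b' : List (Fin N)} (hb : k ≤ b.length) (hb' : k ≤ b'.length)
    (hne : (pathSet b k ∩ pathSet b' k).Nonempty) :
    b'.drop k ∈ pathSet b k ∨ b.drop k ∈ pathSet b' k := by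
  set I := (Finset.range (k+1)).filter (fun i => b.drop i ∈ pathSet b' k) with hI
  have hInem : I.Nonempty := by
    obtain ⟨v, hv⟩ := hne
    rw [Finset.mem_inter] at hv
    obtain ⟨i, hi, rfl⟩ := mem_pathSet.mp hv.1
    exact ⟨i, Finset.mem_filter.mpr ⟨Finset.mem_range.mpr (by omega), hv.2⟩⟩
  have hmem : I.max' hInem ∈ I := I.max'_mem hInem
  set imax := I.max' hInem with him
  rw [hI, Finset.mem_filter, Finset.mem_range, Nat.lt_succ_iff] at hmem
  obtain ⟨hik, hmem⟩ := hmem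
  obtain ⟨i', hi', heq⟩ := mem_pathSet.mp hmem
  by_cases h1 : i' = k
  · subst h1; exact Or.inl (mem_pathSet.mpr ⟨imax, hik, heq.symm⟩)
  by_cases h2 : imax = k
  · have heq' : b'.drop i' = b.drop k := by rw [← h2]; exact heq
    exact Or.inr (mem_pathSet.mpr ⟨i', hi', heq'⟩)
  · exfalso
    have hstep : b'.drop (i'+1) = b.drop (imax+1) := drop_succ_eq heq
    have : imax + 1 ∈ I := Finset.mem_filter.mpr
      ⟨Finset.mem_range.mpr (by omega), mem_pathSet.mpr ⟨i'+1, by omega, hstep⟩⟩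
    have := Finset.le_max' I (imax+1) this
    omega

lemma caseA {N k m : ℕ} {b b' : List (Fin N)} (hb : k ≤ b.length) (hb' : k ≤ b'.length)
    (hm1 : 1 ≤ m) (hmk : m ≤ k) (hcard : (pathSet b k ∩ pathSet b' k).card = m)
    (hA : b'.drop k ∈ pathSet b k) :
    ∃ i0, i0 + m ≤ k + 1 ∧ b.drop i0 = b'.drop (k - m + 1) ∧
      (1 ≤ i0 → b.drop (i0 - 1) ∉ pathSet b' k) := by
  set I := (Finset.range (k+1)).filter (fun i => b.drop i ∈ pathSet b' k) with hI
  have hcardI : I.card = m := by rw [hI, ← inter_card hb, hcard]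
  obtain ⟨imax, himaxk, heqmax⟩ := mem_pathSet.mp hA
  have himax_mem : imax ∈ I := Finset.mem_filter.mpr
    ⟨Finset.mem_range.mpr (by omega), mem_pathSet.mpr ⟨k, le_refl k, heqmax.symm⟩⟩
  have hlenmax : b.length - imax = b'.length - k := by
    have := congrArg List.length heqmax
    simpa [List.length_drop] using this
  have hub : ∀ j ∈ I, j ≤ imax := by
    intro j hj
    rw [hI, Finset.mem_filter, Finset.mem_range, Nat.lt_succ_iff] at hj
    obtain ⟨hjk, hj⟩ := hj
    obtain ⟨i', hi', heq⟩ := mem_pathSet.mp hj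
    have := congrArg List.length heq
    simp only [List.length_drop] at this
    omega
  have hstep : ∀ j ∈ I, j < imax → j + 1 ∈ I := by
    intro j hj hjlt
    rw [hI, Finset.mem_filter, Finset.mem_range, Nat.lt_succ_iff] at hj
    obtain ⟨hjk, hj⟩ := hj
    obtain ⟨i', hi', heq⟩ := mem_pathSet.mp hj
    have hlen := congrArg List.length heq
    simp only [List.length_drop] at hlen
    have hi'lt : i' < k := by omega
    exact Finset.mem_filter.mpr ⟨Finset.mem_range.mpr (by omega),
      mem_pathSet.mpr ⟨i' + 1, by omega, drop_succ_eq heq⟩⟩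
  have hInem : I.Nonempty := ⟨imax, himax_mem⟩
  have hj0mem : I.min' hInem ∈ I := I.min'_mem hInem
  set j0 := I.min' hInem with hj0
  have hj0le : j0 ≤ imax := Finset.min'_le I imax himax_mem
  have hIcc : ∀ x, j0 ≤ x → x ≤ imax → x ∈ I := by
    intro x hx
    induction x, hx using Nat.le_induction with
    | base => intro _; exact hj0mem
    | succ x hx ih => intro hxle; exact hstep x (ih (by omega)) (by omega)
  have hIeq : I = Finset.Icc j0 imax := by
    apply Finset.Subset.antisymm
    · intro j hj
      exact Finset.mem_Icc.mpr ⟨Finset.min'_le I j hj, hub j hj⟩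
    · intro x hx
      rw [Finset.mem_Icc] at hx
      exact hIcc x hx.1 hx.2
  have hcard2 : imax + 1 - j0 = m := by
    rw [hIeq] at hcardI
    simpa [Nat.card_Icc] using hcardI
  have hj0k : j0 ≤ k := by omega
  refine ⟨j0, by omega, ?_, ?_⟩
  · have hmemj0 := hj0mem
    rw [hI, Finset.mem_filter, Finset.mem_range, Nat.lt_succ_iff] at hmemj0
    obtain ⟨hj0k', hmemj0⟩ := hmemj0
    obtain ⟨i', hi', heq⟩ := mem_pathSet.mp hmemj0
    have hlen := congrArg List.length heq
    simp only [List.length_drop] at hlen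
    have : i' = k - m + 1 := by omega
    rw [← this]
    exact heq.symm
  · intro h1 hcontra
    have hmem : j0 - 1 ∈ I := Finset.mem_filter.mpr
      ⟨Finset.mem_range.mpr (by omega), hcontra⟩
    have := Finset.min'_le I _ hmem
    omega


lemma fiber_le {N k m : ℕ} (hN : 2 ≤ N) (hm1 : 1 ≤ m) (hmk : m ≤ k) {b' : List (Fin N)}
    (hb' : k ≤ b'.length) (s : Finset (List (Fin N) × List (Fin N)))
    (hs : ∀ q ∈ s, k ≤ q.1.length ∧ (pathSet q.1 k ∩ pathSet q.2 k).card = m ∧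
      q.2.drop k ∈ pathSet q.1 k ∧ q.2 = b') :
    s.card ≤ N ^ (k - m + 1) := by
  have hz : 0 < N := by omega
  set L := k - m + 1 with hL
  have hLk : L ≤ k := by omega
  set c0 : Fin N := b'.getD (k - m) ⟨0, hz⟩ with hc0
  set iz : List (Fin N) × List (Fin N) → ℕ := fun q => q.1.length - (b'.length - L) with hiz
  have pack : ∀ q ∈ s, iz q ≤ L ∧ q.1.drop (iz q) = b'.drop L ∧
      (1 ≤ iz q → q.1.drop (iz q - 1) ∉ pathSet b' k) := by
    intro q hq
    obtain ⟨hq1, hqc, hqA, hq2⟩ := hs q hq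
    rw [hq2] at hqc hqA
    obtain ⟨i0, hi0, hdrop, hdiv⟩ := caseA hq1 hb' hm1 hmk hqc hqA
    have hlen := congrArg List.length hdrop
    simp only [List.length_drop] at hlen
    have hizq : iz q = i0 := by rw [hiz]; dsimp only; omega
    rw [hizq]
    exact ⟨by omega, hdrop, hdiv⟩
  rw [← card_listsLen N L]
  apply Finset.card_le_card_of_injOn
    (fun q => q.1.take (iz q) ++ List.replicate (L - iz q) c0)
  · intro q hq
    obtain ⟨h1, h2, _⟩ := pack q hq
    obtain ⟨hq1, _, _, _⟩ := hs q hq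
    rw [Finset.mem_coe, mem_listsLen]
    simp only [List.length_append, List.length_take, List.length_replicate]
    omega
  · have key : ∀ q ∈ s, ∀ q' ∈ s, iz q < iz q' →
        q.1.take (iz q) ++ List.replicate (L - iz q) c0 =
          q'.1.take (iz q') ++ List.replicate (L - iz q') c0 → False := by
      intro q hq q' hq' hlt hfe
      obtain ⟨hle1, hdrop1, _⟩ := pack q hq
      obtain ⟨hle2, hdrop2, hdiv2⟩ := pack q' hq'
      obtain ⟨hlen1, _, _, _⟩ := hs q hq
      obtain ⟨hlen2, _, _, _⟩ := hs q' hq'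
      have hjL : iz q' - 1 < L := by omega
      have hjlen : iz q' - 1 < q'.1.length := by omega
      have hkm : k - m < b'.length := by omega
      have htl1 : (q.1.take (iz q)).length = iz q := by
        simp only [List.length_take]; omega
      have htl2 : (q'.1.take (iz q')).length = iz q' := by
        simp only [List.length_take]; omega
      have hA1 : (q.1.take (iz q) ++ List.replicate (L - iz q) c0).getD (iz q' - 1) c0
          = c0 := by
        rw [List.getD_eq_getElem _ _ (by
          simp only [List.length_append, List.length_take, List.length_replicate]; omega)]
        rw [List.getElem_append_right (by rw [htl1]; omega)]
        exact List.getElem_replicate _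
      have hA2 : (q'.1.take (iz q') ++ List.replicate (L - iz q') c0).getD (iz q' - 1) c0
          = q'.1[iz q' - 1]'hjlen := by
        rw [List.getD_eq_getElem _ _ (by
          simp only [List.length_append, List.length_take, List.length_replicate]; omega)]
        rw [List.getElem_append_left (by rw [htl2]; omega)]
        exact List.getElem_take
      have hgd : c0 = q'.1[iz q' - 1]'hjlen := by
        rw [← hA1, ← hA2, hfe]
      apply hdiv2 (by omega)
      have hc0e : c0 = b'[k - m]'hkm := List.getD_eq_getElem _ _ hkm
      have e1 := List.drop_eq_getElem_cons (l := q'.1) hjlen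
      have e1' : iz q' - 1 + 1 = iz q' := by omega
      rw [e1'] at e1
      have e2 := List.drop_eq_getElem_cons (l := b') hkm
      have e2' : k - m + 1 = L := by omega
      rw [e2'] at e2
      have heqd : q'.1.drop (iz q' - 1) = b'.drop (k - m) := by
        rw [e1, e2, hdrop2, ← hgd, hc0e]
      rw [heqd]
      exact mem_pathSet.mpr ⟨k - m, by omega, rfl⟩
    intro q1 hq1 q2 hq2 hfe
    rw [Finset.mem_coe] at hq1 hq2
    dsimp only at hfe
    have hieq : iz q1 = iz q2 := by
      rcases lt_trichotomy (iz q1) (iz q2) with h | h | h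
      · exact absurd hfe (fun hfe => key q1 hq1 q2 hq2 h hfe)
      · exact h
      · exact absurd hfe.symm (fun hfe => key q2 hq2 q1 hq1 h hfe)
    obtain ⟨hle1, hdrop1, _⟩ := pack q1 hq1
    obtain ⟨hle2, hdrop2, _⟩ := pack q2 hq2
    obtain ⟨hlen1, _, _, hq12⟩ := hs q1 hq1
    obtain ⟨hlen2, _, _, hq22⟩ := hs q2 hq2
    have htl1 : (q1.1.take (iz q1)).length = iz q1 := by
      simp only [List.length_take]; omega
    have htl2 : (q2.1.take (iz q2)).length = iz q2 := by
      simp only [List.length_take]; omega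
    have htake : q1.1.take (iz q1) = q2.1.take (iz q2) := by
      rw [hieq] at hfe htl1 ⊢
      have h2 := congrArg (List.take (iz q2)) hfe
      rw [List.take_left' htl1, List.take_left' htl2] at h2
      exact h2
    have hfst : q1.1 = q2.1 := by
      conv_lhs => rw [← List.take_append_drop (iz q1) q1.1]
      conv_rhs => rw [← List.take_append_drop (iz q2) q2.1]
      rw [htake, hdrop1, hdrop2]
    exact Prod.ext hfst (by rw [hq12, hq22])

/-- `a m`, the number of ordered pairs of downward paths of length `k` in the depth-`n`
tree sharing exactly `m` vertices, satisfies `a m ≤ 2 M N^{k-m+1}` for `1 ≤ m ≤ k`, where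
`M` is the total number of downward paths of length `k`. -/
theorem stmt9 (N n k : ℕ) (hN : 2 ≤ N) (hk : k ≤ n) (m : ℕ) (hm1 : 1 ≤ m) (hmk : m ≤ k) :
    (((pathBottoms N n k) ×ˢ (pathBottoms N n k)).filter
        (fun q => (pathSet q.1 k ∩ pathSet q.2 k).card = m)).card
      ≤ 2 * (pathBottoms N n k).card * N ^ (k - m + 1) := by
  classical
  set T := ((pathBottoms N n k) ×ˢ (pathBottoms N n k)).filter
      (fun q => (pathSet q.1 k ∩ pathSet q.2 k).card = m) with hT
  set TA := T.filter (fun q => q.2.drop k ∈ pathSet q.1 k) with hTA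
  set TB := T.filter (fun q => q.1.drop k ∈ pathSet q.2 k) with hTB
  have hmemT : ∀ q ∈ T, (k ≤ q.1.length ∧ q.1.length ≤ n) ∧ (k ≤ q.2.length ∧ q.2.length ≤ n)
      ∧ (pathSet q.1 k ∩ pathSet q.2 k).card = m ∧ q.1 ∈ pathBottoms N n k ∧
      q.2 ∈ pathBottoms N n k := by
    intro q hq
    rw [hT, Finset.mem_filter, Finset.mem_product] at hq
    exact ⟨mem_pathBottoms.mp hq.1.1, mem_pathBottoms.mp hq.1.2, hq.2, hq.1.1, hq.1.2⟩
  have hsplit : T ⊆ TA ∪ TB := by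
    intro q hq
    obtain ⟨h1, h2, hc, _, _⟩ := hmemT q hq
    have hne : (pathSet q.1 k ∩ pathSet q.2 k).Nonempty := by
      rw [← Finset.card_pos, hc]; omega
    rcases topCase h1.1 h2.1 hne with h | h
    · exact Finset.mem_union_left _ (Finset.mem_filter.mpr ⟨hq, h⟩)
    · exact Finset.mem_union_right _ (Finset.mem_filter.mpr ⟨hq, h⟩)
  have hswap : TB.card = TA.card := by
    apply Finset.card_bij' (fun q _ => Prod.swap q) (fun q _ => Prod.swap q)
    · intro a ha
      rw [hTB, Finset.mem_filter] at ha
      obtain ⟨haT, hA⟩ := ha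
      obtain ⟨_, _, hc, hp1, hp2⟩ := hmemT a haT
      rw [hTA, Finset.mem_filter]
      refine ⟨?_, ?_⟩
      · rw [hT, Finset.mem_filter, Finset.mem_product]
        refine ⟨⟨hp2, hp1⟩, ?_⟩
        simp only [Prod.fst_swap, Prod.snd_swap]
        rw [Finset.inter_comm]
        exact hc
      · simpa only [Prod.fst_swap, Prod.snd_swap] using hA
    · intro a ha
      rw [hTA, Finset.mem_filter] at ha
      obtain ⟨haT, hA⟩ := ha
      obtain ⟨_, _, hc, hp1, hp2⟩ := hmemT a haT
      rw [hTB, Finset.mem_filter]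
      refine ⟨?_, ?_⟩
      · rw [hT, Finset.mem_filter, Finset.mem_product]
        refine ⟨⟨hp2, hp1⟩, ?_⟩
        simp only [Prod.fst_swap, Prod.snd_swap]
        rw [Finset.inter_comm]
        exact hc
      · simpa only [Prod.fst_swap, Prod.snd_swap] using hA
    · intro a _; simp
    · intro a _; simp
  have hTAcard : TA.card ≤ (pathBottoms N n k).card * N ^ (k - m + 1) := by
    have hfib : ∀ q ∈ TA, q.2 ∈ pathBottoms N n k := by
      intro q hq
      rw [hTA, Finset.mem_filter] at hq
      exact (hmemT q hq.1).2.2.2.2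
    have hb : ∀ b' ∈ pathBottoms N n k,
        (TA.filter (fun a => a.2 = b')).card ≤ N ^ (k - m + 1) := by
      intro b' hb'
      apply fiber_le hN hm1 hmk (mem_pathBottoms.mp hb').1
      intro q hq
      rw [Finset.mem_filter] at hq
      obtain ⟨hqTA, hqb⟩ := hq
      rw [hTA, Finset.mem_filter] at hqTA
      obtain ⟨hqT, hA⟩ := hqTA
      obtain ⟨h1, _, hc, _, _⟩ := hmemT q hqT
      exact ⟨h1.1, hc, hA, hqb⟩
    rw [Finset.card_eq_sum_card_fiberwise hfib]
    exact le_trans (Finset.sum_le_sum hb) (by rw [Finset.sum_const, smul_eq_mul])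
  calc T.card ≤ (TA ∪ TB).card := Finset.card_le_card hsplit
    _ ≤ TA.card + TB.card := Finset.card_union_le _ _
    _ = 2 * TA.card := by omega
    _ ≤ 2 * ((pathBottoms N n k).card * N ^ (k - m + 1)) := by omega
    _ = 2 * (pathBottoms N n k).card * N ^ (k - m + 1) := by ring
end
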